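/- For a relation r on a finite type with n elements, the boolean matrix sequence T_0 = A, T_{k+1} = T_k + T_k·T_k (boolean addition and multiplication, with A the adjacency matrix of r) stabilizes after at most ⌈log₂ n⌉ iterations at the transitive closure of A. In particular the transitive closure can be computed with O(log n) boolean matrix multiplications. -/

import Mathlib

private def relPow {α : Type*} (r : α → α → Prop) : ℕ → α → α → Prop
  | 0 => Eq
  | n+1 => fun i j => ∃ l, r i l ∧ relPow r n l j

private lemma relPow_add {α : Type*} (r : α → α → Prop) (a b : ℕ) (i j : α) :
    relPow r (a + b) i j ↔ ∃ l, relPow r a i l ∧ relPow r b l j := by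
  induction a generalizing i with
  | zero => simp [relPow]
  | succ a ih =>
    have hrw : a + 1 + b = (a + b) + 1 := by omega
    rw [hrw]
    show (∃ l, r i l ∧ relPow r (a+b) l j) ↔ _
    constructor
    · rintro ⟨l, hl, h⟩
      obtain ⟨m, hm1, hm2⟩ := (ih l).mp h
      exact ⟨m, ⟨l, hl, hm1⟩, hm2⟩
    · rintro ⟨m, ⟨l, hl, h1⟩, h2⟩
      exact ⟨l, hl, (ih l).mpr ⟨m, h1, h2⟩⟩

private lemma transGen_of_relPow {α : Type*} {r : α → α → Prop} :
    ∀ m {i j : α}, relPow r (m+1) i j → Relation.TransGen r i j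
  | 0, _, _, ⟨_, hl, hp⟩ => by cases hp; exact .single hl
  | m+1, _, _, ⟨_, hl, hp⟩ => .head hl (transGen_of_relPow m hp)

private lemma transGen_iff_relPow {α : Type*} (r : α → α → Prop) (i j : α) :
    Relation.TransGen r i j ↔ ∃ m, 1 ≤ m ∧ relPow r m i j := by
  constructor
  · intro h
    induction h with
    | single h => exact ⟨1, le_refl _, _, h, rfl⟩
    | tail _ h ih =>
      obtain ⟨m, hm, hp⟩ := ih
      exact ⟨m + 1, Nat.le_succ_of_le hm,
        (relPow_add r m 1 _ _).mpr ⟨_, hp, _, h, rfl⟩⟩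
  · rintro ⟨m, hm, hp⟩
    cases m with
    | zero => omega
    | succ m => exact transGen_of_relPow m hp

private lemma path_of_relPow {α : Type*} {r : α → α → Prop} :
    ∀ m {i j : α}, relPow r m i j →
      ∃ f : ℕ → α, f 0 = i ∧ f m = j ∧ ∀ t < m, r (f t) (f (t+1))
  | 0, i, j, h => ⟨fun _ => i, rfl, by cases h; rfl, fun t ht => by omega⟩
  | m+1, i, j, h => by
    obtain ⟨l, hl, hp⟩ := h
    obtain ⟨f, hf0, hfm, hstep⟩ := path_of_relPow m hp
    refine ⟨fun t => if t = 0 then i else f (t - 1), by simp, by simp [hfm], ?_⟩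
    intro t ht
    rcases Nat.eq_zero_or_pos t with h0 | h0
    · subst h0; simpa [hf0] using hl
    · have h1 : t ≠ 0 := by omega
      have h2 : t + 1 ≠ 0 := by omega
      simp only [h1, h2, if_false]
      have : t + 1 - 1 = (t - 1) + 1 := by omega
      rw [this]
      exact hstep (t - 1) (by omega)

private lemma relPow_of_path {α : Type*} {r : α → α → Prop} :
    ∀ m (f : ℕ → α), (∀ t < m, r (f t) (f (t+1))) → relPow r m (f 0) (f m)
  | 0, f, _ => rfl
  | m+1, f, hstep =>
    ⟨f 1, hstep 0 (by omega), by
      have := relPow_of_path m (fun t => f (t + 1))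
        (fun t ht => hstep (t + 1) (by omega))
      simpa using this⟩

private lemma shorten {α : Type*} [Fintype α] {r : α → α → Prop} :
    ∀ m {i j : α}, 1 ≤ m → relPow r m i j →
      ∃ m', 1 ≤ m' ∧ m' ≤ Fintype.card α ∧ relPow r m' i j := by
  intro m
  induction m using Nat.strong_induction_on with
  | _ m ih =>
    intro i j hm hp
    by_cases hcard : m ≤ Fintype.card α
    · exact ⟨m, hm, hcard, hp⟩
    · push_neg at hcard
      obtain ⟨f, hf0, hfm, hstep⟩ := path_of_relPow m hp
      obtain ⟨a, b, hab, hfab⟩ := Fintype.exists_ne_map_eq_of_card_lt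
        (fun t : Fin m => f t) (by simpa using hcard)
      wlog hlt : (a : ℕ) < (b : ℕ) generalizing a b
      · exact this b a hab.symm hfab.symm
          (by rcases Nat.lt_or_ge (b : ℕ) (a : ℕ) with h | h; exact h
              exact absurd (Fin.ext (by omega)) hab)
      set d := (b : ℕ) - (a : ℕ) with hd
      have hd1 : 1 ≤ d := by omega
      have hbm : (b : ℕ) < m := b.isLt
      have hdm : d ≤ m := by omega
      -- spliced path
      set g : ℕ → α := fun t => if t ≤ (a : ℕ) then f t else f (t + d) with hg
      have hstep' : ∀ t < m - d, r (g t) (g (t + 1)) := by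
        intro t ht
        by_cases h1 : t + 1 ≤ (a : ℕ)
        · simp only [hg, if_pos (by omega : t ≤ (a:ℕ)), if_pos h1]
          exact hstep t (by omega)
        · by_cases h2 : t ≤ (a : ℕ)
          · have hta : t = (a : ℕ) := by omega
            subst hta
            simp only [hg, if_pos h2, if_neg h1]
            have hb : (a : ℕ) + 1 + d = (b : ℕ) + 1 := by omega
            rw [hfab, hb]
            exact hstep b (by omega)
          · simp only [hg, if_neg h2, if_neg (by omega : ¬ t + 1 ≤ (a:ℕ))]
            have : t + 1 + d = (t + d) + 1 := by omega
            rw [this]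
            exact hstep (t + d) (by omega)
      have hpg : relPow r (m - d) (g 0) (g (m - d)) := relPow_of_path _ g hstep'
      have hg0 : g 0 = i := by
        simp only [hg, if_pos (Nat.zero_le _)]; exact hf0
      have hgm : g (m - d) = j := by
        by_cases h : m - d ≤ (a : ℕ)
        · exact absurd h (by omega)
        · simp only [hg, if_neg h]
          have : m - d + d = m := by omega
          rw [this, hfm]
      rw [hg0, hgm] at hpg
      exact ih (m - d) (by omega) (by omega) hpg

private lemma T_iff {α : Type*} (r : α → α → Prop) (T : ℕ → α → α → Prop)
    (hT0 : ∀ i j, T 0 i j ↔ r i j)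
    (hTs : ∀ k i j, T (k+1) i j ↔ (T k i j ∨ ∃ l, T k i l ∧ T k l j)) :
    ∀ k i j, T k i j ↔ ∃ m, 1 ≤ m ∧ m ≤ 2 ^ k ∧ relPow r m i j := by
  intro k
  induction k with
  | zero =>
    intro i j
    rw [hT0]
    constructor
    · intro h; exact ⟨1, le_refl _, by norm_num, _, h, rfl⟩
    · rintro ⟨m, h1, h2, hp⟩
      have : m = 1 := by omega
      subst this
      obtain ⟨l, hl, hp⟩ := hp
      cases hp; exact hl
  | succ k ih =>
    intro i j
    rw [hTs, ih i j]
    constructor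
    · rintro (⟨m, h1, h2, hp⟩ | ⟨l, hl1, hl2⟩)
      · exact ⟨m, h1, le_trans h2 (Nat.pow_le_pow_right (by norm_num) (Nat.le_succ _)), hp⟩
      · obtain ⟨m₁, hm1, hm1', hp1⟩ := (ih i l).mp hl1
        obtain ⟨m₂, hm2, hm2', hp2⟩ := (ih l j).mp hl2
        refine ⟨m₁ + m₂, by omega, ?_, (relPow_add r m₁ m₂ i j).mpr ⟨l, hp1, hp2⟩⟩
        calc m₁ + m₂ ≤ 2 ^ k + 2 ^ k := by omega
        _ = 2 ^ (k + 1) := by ring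
    · rintro ⟨m, h1, h2, hp⟩
      by_cases h : m ≤ 2 ^ k
      · exact Or.inl ⟨m, h1, h, hp⟩
      · push_neg at h
        right
        have hm : m = 2 ^ k + (m - 2 ^ k) := by omega
        rw [hm] at hp
        obtain ⟨l, hp1, hp2⟩ := (relPow_add r _ _ i j).mp hp
        have hpk : (0:ℕ) < 2 ^ k := Nat.pow_pos (by norm_num)
        refine ⟨l, (ih i l).mpr ⟨2 ^ k, by omega, le_refl _, hp1⟩,
          (ih l j).mpr ⟨m - 2 ^ k, by omega, ?_, hp2⟩⟩
        have : 2 ^ (k+1) = 2 ^ k + 2 ^ k := by ring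
        omega

/-- Fischer–Meyer squaring: `T 0 = A`, `T (k+1) = T k + T k · T k` (boolean
addition and product). `T k` stabilizes after at most `⌈log₂ n⌉` iterations at
the transitive closure of the relation `r` whose adjacency matrix is `A`. -/
theorem stmt_4 {α : Type*} [Fintype α] (r : α → α → Prop)
    (T : ℕ → α → α → Prop)
    (hT0 : ∀ i j, T 0 i j ↔ r i j)
    (hTs : ∀ k i j, T (k+1) i j ↔ (T k i j ∨ ∃ l, T k i l ∧ T k l j)) :
    ∀ k, Nat.clog 2 (Fintype.card α) ≤ k →
      ∀ i j, T k i j ↔ Relation.TransGen r i j := by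
  intro k hk i j
  rw [T_iff r T hT0 hTs, transGen_iff_relPow]
  constructor
  · rintro ⟨m, h1, _, hp⟩; exact ⟨m, h1, hp⟩
  · rintro ⟨m, h1, hp⟩
    obtain ⟨m', h1', h2', hp'⟩ := shorten m h1 hp
    refine ⟨m', h1', ?_, hp'⟩
    calc m' ≤ Fintype.card α := h2'
    _ ≤ 2 ^ Nat.clog 2 (Fintype.card α) := Nat.le_pow_clog (by norm_num) _
    _ ≤ 2 ^ k := Nat.pow_le_pow_right (by norm_num) hk
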